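/- Let V be a nonempty countable set and b : P(V) → [0,∞] satisfy conditions (0) b(X) = 0 iff X ∈ {∅, V}; (1) symmetry; (2) submodularity; (3) monotone-continuity: b(lim X_n) = lim b(X_n) for every ⊆-monotone sequence (X_n); and (4) finiteness of λ_b. If (X_n) is a ⊆-monotone sequence of optimal cuts with lim X_n ∉ {∅, V}, then (X_n) has no essential subsequence; in particular (X_n) itself is not essential. -/

import Mathlib

open Set Filter Topology ENNReal

noncomputable section

/-- `λ_b(u,v)`: the infimum of `b(X)` over all `u-v` cuts `X`
(sets with `u ∈ X` and `v ∉ X`). -/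
def lamB {V : Type*} (b : Set V → ℝ≥0∞) (u v : V) : ℝ≥0∞ :=
  ⨅ (X : Set V) (_ : u ∈ X ∧ v ∉ X), b X

/-- `X` is an optimal `u-v` cut: a `u-v` cut with `b(X) = λ_b(u,v)`. -/
def IsOptCut {V : Type*} (b : Set V → ℝ≥0∞) (u v : V) (X : Set V) : Prop :=
  u ∈ X ∧ v ∉ X ∧ b X = lamB b u v

/-- `X` separates `u` and `v` optimally: `X` or its complement is an optimal `u-v` cut. -/
def SepOptimally {V : Type*} (b : Set V → ℝ≥0∞) (u v : V) (X : Set V) : Prop :=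
  IsOptCut b u v X ∨ IsOptCut b u v Xᶜ

/-- A sequence of cuts is essential if each member separates optimally some vertex pair
that no earlier member separates optimally. -/
def Essential {V : Type*} (b : Set V → ℝ≥0∞) (X : ℕ → Set V) : Prop :=
  ∀ n : ℕ, ∃ u v : V, u ≠ v ∧ SepOptimally b u v (X n) ∧
    ∀ m < n, ¬ SepOptimally b u v (X m)

theorem lamB_le {V : Type*} (b : Set V → ℝ≥0∞) {u v : V} {Z : Set V}
    (hu : u ∈ Z) (hv : v ∉ Z) : lamB b u v ≤ b Z :=
  iInf₂_le Z ⟨hu, hv⟩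

theorem lamB_comm {V : Type*} (b : Set V → ℝ≥0∞) (h1 : ∀ X : Set V, b Xᶜ = b X)
    (u v : V) : lamB b u v = lamB b v u := by
  have key : ∀ x y : V, lamB b x y ≤ lamB b y x := by
    intro x y
    refine le_iInf₂ fun Z hZ => ?_
    calc lamB b x y ≤ b Zᶜ := lamB_le b (by simpa using hZ.2) (by simpa using hZ.1)
    _ = b Z := h1 Z
  exact le_antisymm (key u v) (key v u)

theorem sepOptimally_comm {V : Type*} (b : Set V → ℝ≥0∞) (h1 : ∀ X : Set V, b Xᶜ = b X)
    {u v : V} {Z : Set V} : SepOptimally b u v Z ↔ SepOptimally b v u Z := by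
  have key : ∀ (x y : V) (W : Set V), SepOptimally b x y W → SepOptimally b y x W := by
    rintro x y W (⟨hx, hy, he⟩ | ⟨hx, hy, he⟩)
    · exact Or.inr ⟨by simpa using hy, by simpa using hx,
        by rw [h1, he, lamB_comm b h1]⟩
    · refine Or.inl ⟨by simpa using hy, by simpa using hx, ?_⟩
      rw [← h1 W, he, lamB_comm b h1]
  exact ⟨key u v Z, key v u Z⟩

theorem sepOptimally_compl {V : Type*} (b : Set V → ℝ≥0∞)
    {u v : V} {Z : Set V} : SepOptimally b u v Zᶜ ↔ SepOptimally b u v Z := by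
  rw [SepOptimally, SepOptimally, compl_compl, or_comm]

/-- Core lemma: an increasing essential sequence has limit `∅` or `univ`. -/
theorem core_not_essential {V : Type*} (b : Set V → ℝ≥0∞)
    (h0 : ∀ X : Set V, b X = 0 ↔ X = ∅ ∨ X = Set.univ)
    (h1 : ∀ X : Set V, b Xᶜ = b X)
    (h2 : ∀ X Y : Set V, b (X ∩ Y) + b (X ∪ Y) ≤ b X + b Y)
    (h3m : ∀ X : ℕ → Set V, Monotone X →
      Filter.Tendsto (fun n => b (X n)) Filter.atTop (nhds (b (⋃ n, X n))))
    (h3a : ∀ X : ℕ → Set V, Antitone X →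
      Filter.Tendsto (fun n => b (X n)) Filter.atTop (nhds (b (⋂ n, X n))))
    (h4 : ∀ u v : V, u ≠ v → lamB b u v < ⊤)
    (Y : ℕ → Set V) (hmono : Monotone Y)
    (hL0 : (⋃ n, Y n) ≠ ∅) (hL1 : (⋃ n, Y n) ≠ Set.univ)
    (hE : Essential b Y) : False := by
  set L := ⋃ n, Y n with hLdef
  have hYL : ∀ n, Y n ⊆ L := fun n => subset_iUnion Y n
  have hbL : 0 < b L := by
    rcases eq_or_ne (b L) 0 with h | h
    · rcases (h0 L).1 h with h' | h'
      · exact absurd h' hL0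
      · exact absurd h' hL1
    · exact pos_iff_ne_zero.mpr h
  obtain ⟨ε, hε0, hεL⟩ := exists_between hbL
  -- continuity consequences
  have t1 : Tendsto (fun m => b (L \ Y m)) atTop (𝓝 0) := by
    have ha : Antitone (fun m => L \ Y m) := fun i j hij =>
      diff_subset_diff_right (hmono hij)
    have := h3a (fun m => L \ Y m) ha
    have hI : ⋂ m, (L \ Y m) = ∅ := by
      apply eq_empty_iff_forall_notMem.mpr
      intro x hx
      simp only [mem_iInter, mem_diff] at hx
      obtain ⟨n, hn⟩ := mem_iUnion.mp (hx 0).1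
      exact (hx n).2 hn
    rw [hI, (h0 ∅).2 (Or.inl rfl)] at this
    exact this
  have t2 : Tendsto (fun m => b (Y m ∪ Lᶜ)) atTop (𝓝 0) := by
    have hm : Monotone (fun m => Y m ∪ Lᶜ) := fun i j hij =>
      union_subset_union_left _ (hmono hij)
    have := h3m (fun m => Y m ∪ Lᶜ) hm
    have hU : ⋃ m, (Y m ∪ Lᶜ) = Set.univ := by
      apply eq_univ_iff_forall.mpr
      intro x
      by_cases hx : x ∈ L
      · obtain ⟨n, hn⟩ := mem_iUnion.mp hx
        exact mem_iUnion.mpr ⟨n, Or.inl hn⟩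
      · exact mem_iUnion.mpr ⟨0, Or.inr hx⟩
    rw [hU, (h0 Set.univ).2 (Or.inr rfl)] at this
    exact this
  have t3 : Tendsto (fun m => b (Y m)) atTop (𝓝 (b L)) := h3m Y hmono
  have e1 : ∀ᶠ m in atTop, b (L \ Y m) < ε := t1.eventually_lt_const hε0
  have e2 : ∀ᶠ m in atTop, b (Y m ∪ Lᶜ) < ε := t2.eventually_lt_const hε0
  have e3 : ∀ᶠ m in atTop, ε < b (Y m) := t3.eventually_const_lt hεL
  obtain ⟨N, hN⟩ := eventually_atTop.mp ((e1.and e2).and e3)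
  -- normalized essential pairs
  have norm : ∀ n, ∃ u v : V, u ≠ v ∧ u ∈ Y n ∧ v ∉ Y n ∧ b (Y n) = lamB b u v ∧
      ∀ m < n, ¬ SepOptimally b u v (Y m) := by
    intro n
    obtain ⟨u, v, hne, hsep, hnew⟩ := hE n
    rcases hsep with ⟨hu, hv, he⟩ | ⟨hu, hv, he⟩
    · exact ⟨u, v, hne, hu, hv, he, hnew⟩
    · refine ⟨v, u, hne.symm, by simpa using hv, by simpa using hu, ?_, ?_⟩
      · rw [← h1, he, lamB_comm b h1]
      · intro m hm hs
        exact hnew m hm ((sepOptimally_comm b h1).mp hs)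
  -- key1: if b (L \ Y m) < ε and m < n, the source of the n-th pair is in Y m
  have key1 : ∀ m n : ℕ, b (L \ Y m) < ε → m < n → ∀ u v : V, u ≠ v → u ∈ Y n →
      v ∉ Y n → b (Y n) = lamB b u v → u ∈ Y m := by
    intro m n hsm hmn u v hne hu hv he
    by_contra hum
    have hcut : lamB b u v ≤ b (Y n \ Y m) :=
      lamB_le b ⟨hu, hum⟩ (fun h => hv h.1)
    have hint : Y n ∩ (L \ Y m) = Y n \ Y m := by
      ext x
      exact ⟨fun hx => ⟨hx.1, hx.2.2⟩, fun hx => ⟨hx.1, hYL n hx.1, hx.2⟩⟩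
    have hun : Y n ∪ (L \ Y m) = L := by
      apply subset_antisymm (union_subset (hYL n) diff_subset)
      intro x hx
      by_cases hxm : x ∈ Y m
      · exact Or.inl (hmono hmn.le hxm)
      · exact Or.inr ⟨hx, hxm⟩
    have hsub := h2 (Y n) (L \ Y m)
    rw [hint, hun] at hsub
    have hfin : b (Y n) ≠ ⊤ := by rw [he]; exact (h4 u v hne).ne
    have hchain : b (Y n) + b L ≤ b (Y n) + b (L \ Y m) :=
      le_trans (add_le_add_left (he ▸ hcut) _) hsub
    have hbLle : b L ≤ b (L \ Y m) := (ENNReal.add_le_add_iff_left hfin).mp hchain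
    exact absurd (hbLle.trans_lt hsm) (not_lt.mpr hεL.le)
  -- key2: the "v ∈ L" case is impossible for n > N
  have key2 : ∀ m n : ℕ, m < n → b (Y m ∪ Lᶜ) < ε → ε < b (Y m) → ∀ u v : V,
      u ≠ v → u ∈ Y n → v ∉ Y n → v ∈ L → b (Y n) = lamB b u v → False := by
    intro m n hmn hsm hbm u v hne hu hv hvL he
    have hcut : lamB b u v ≤ b (Y n ∪ Lᶜ) :=
      lamB_le b (Or.inl hu) (by rintro (h | h) <;> [exact hv h; exact h hvL])
    have hint : Y n ∩ (Y m ∪ Lᶜ) = Y m := by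
      ext x
      constructor
      · rintro ⟨hx1, hx2 | hx2⟩
        · exact hx2
        · exact absurd (hYL n hx1) hx2
      · intro hx
        exact ⟨hmono hmn.le hx, Or.inl hx⟩
    have hun : Y n ∪ (Y m ∪ Lᶜ) = Y n ∪ Lᶜ := by
      rw [← union_assoc, union_eq_self_of_subset_right (hmono hmn.le)]
    have hsub := h2 (Y n) (Y m ∪ Lᶜ)
    rw [hint, hun] at hsub
    have hfin : b (Y n) ≠ ⊤ := by rw [he]; exact (h4 u v hne).ne
    have hchain : b (Y n) + b (Y m) ≤ b (Y n) + b (Y m ∪ Lᶜ) := by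
      calc b (Y n) + b (Y m) ≤ b (Y n ∪ Lᶜ) + b (Y m) :=
            add_le_add_left (he ▸ hcut) _
      _ = b (Y m) + b (Y n ∪ Lᶜ) := add_comm _ _
      _ ≤ b (Y n) + b (Y m ∪ Lᶜ) := hsub
    have : b (Y m) ≤ b (Y m ∪ Lᶜ) := (ENNReal.add_le_add_iff_left hfin).mp hchain
    exact absurd (this.trans_lt hsm) (not_lt.mpr hbm.le)
  -- assemble
  obtain ⟨u1, v1, hne1, hu1, hv1, he1, hnew1⟩ := norm (N + 1)
  obtain ⟨u2, v2, hne2, hu2, hv2, he2, hnew2⟩ := norm (N + 2)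
  have hN1 := hN (N + 1) (by omega)
  have hN2 := hN (N + 2) (by omega)
  have hNN := hN N le_rfl
  by_cases hv1L : v1 ∈ L
  · exact key2 N (N + 1) (by omega) hNN.1.2 hNN.2 u1 v1 hne1 hu1 hv1 hv1L he1
  by_cases hv2L : v2 ∈ L
  · exact key2 N (N + 2) (by omega) hNN.1.2 hNN.2 u2 v2 hne2 hu2 hv2 hv2L he2
  -- both v's outside L
  have hu21 : u2 ∈ Y (N + 1) :=
    key1 (N + 1) (N + 2) hN1.1.1 (by omega) u2 v2 hne2 hu2 hv2 he2
  have hv2n1 : v2 ∉ Y (N + 1) := fun h => hv2L (hYL _ h)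
  have hv1n2 : v1 ∉ Y (N + 2) := fun h => hv1L (hYL _ h)
  -- Y (N+2) is a u1-v1 cut, so b (Y (N+1)) = λ(u1,v1) ≤ b (Y (N+2))
  have hle : b (Y (N + 1)) ≤ b (Y (N + 2)) := by
    rw [he1]
    exact lamB_le b (hmono (by omega : N + 1 ≤ N + 2) hu1) hv1n2
  -- Y (N+1) is a u2-v2 cut but not an optimal one
  have hnopt : ¬ SepOptimally b u2 v2 (Y (N + 1)) := hnew2 (N + 1) (by omega)
  have hne' : b (Y (N + 1)) ≠ lamB b u2 v2 := fun h =>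
    hnopt (Or.inl ⟨hu21, hv2n1, h⟩)
  have hge : lamB b u2 v2 ≤ b (Y (N + 1)) := lamB_le b hu21 hv2n1
  have hlt : b (Y (N + 2)) < b (Y (N + 1)) := he2 ▸ lt_of_le_of_ne hge (Ne.symm hne')
  exact absurd hle (not_le.mpr hlt)

/-- A `⊆`-monotone sequence of optimal cuts whose limit is neither `∅` nor `V` has no
essential subsequence. -/
theorem no_essential_subsequence {V : Type*} [Countable V] [Nonempty V]
    (b : Set V → ℝ≥0∞)
    (h0 : ∀ X : Set V, b X = 0 ↔ X = ∅ ∨ X = Set.univ)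
    (h1 : ∀ X : Set V, b Xᶜ = b X)
    (h2 : ∀ X Y : Set V, b (X ∩ Y) + b (X ∪ Y) ≤ b X + b Y)
    (h3m : ∀ X : ℕ → Set V, Monotone X →
      Filter.Tendsto (fun n => b (X n)) Filter.atTop (nhds (b (⋃ n, X n))))
    (h3a : ∀ X : ℕ → Set V, Antitone X →
      Filter.Tendsto (fun n => b (X n)) Filter.atTop (nhds (b (⋂ n, X n))))
    (h4 : ∀ u v : V, u ≠ v → lamB b u v < ⊤)
    (X : ℕ → Set V) (hopt : ∀ n, ∃ x y : V, x ≠ y ∧ IsOptCut b x y (X n))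
    (L : Set V)
    (hmono : (Monotone X ∧ L = ⋃ n, X n) ∨ (Antitone X ∧ L = ⋂ n, X n))
    (hL0 : L ≠ ∅) (hL1 : L ≠ Set.univ) :
    ∀ φ : ℕ → ℕ, StrictMono φ → ¬ Essential b (fun n => X (φ n)) := by
  intro φ hφ hEss
  rcases hmono with ⟨hX, hL⟩ | ⟨hX, hL⟩
  · -- increasing case
    have hm : Monotone (fun n => X (φ n)) := hX.comp hφ.monotone
    have hU : (⋃ n, X (φ n)) = L := by
      rw [hL]
      apply subset_antisymm
      · exact iUnion_mono' fun n => ⟨φ n, le_rfl⟩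
      · exact iUnion_mono' fun n => ⟨n, hX (hφ.le_apply)⟩
    exact core_not_essential b h0 h1 h2 h3m h3a h4 _ hm
      (hU ▸ hL0) (hU ▸ hL1) hEss
  · -- decreasing case: complement
    have hm : Monotone (fun n => (X (φ n))ᶜ) := fun i j hij =>
      compl_subset_compl.mpr (hX (hφ.monotone hij))
    have hU : (⋃ n, (X (φ n))ᶜ) = Lᶜ := by
      rw [hL, ← compl_iInter, compl_inj_iff]
      apply subset_antisymm
      · exact iInter_mono' fun n => ⟨n, hX (hφ.le_apply)⟩
      · exact iInter_mono' fun n => ⟨φ n, le_rfl⟩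
    have hE' : Essential b (fun n => (X (φ n))ᶜ) := by
      intro n
      obtain ⟨u, v, hne, hsep, hnew⟩ := hEss n
      exact ⟨u, v, hne, (sepOptimally_compl b).mpr hsep,
        fun m hm' hs => hnew m hm' ((sepOptimally_compl b).mp hs)⟩
    refine core_not_essential b h0 h1 h2 h3m h3a h4 _ hm ?_ ?_ hE'
    · rw [hU]; simpa using hL1
    · rw [hU]; simpa using hL0
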